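/- (Baire's grand theorem) Let X be a Polish space, Y a separable metrizable space, and f : X → Y. Then f is Baire class 1 if and only if the restriction f↾K has a point of continuity for every nonempty compact K ⊆ X. -/

import Mathlib

open Filter Topology TopologicalSpace

/-- A set is Fσ if it is a countable union of closed sets. -/
def IsFsigma {X : Type*} [TopologicalSpace X] (S : Set X) : Prop :=
  ∃ F : ℕ → Set X, (∀ n, IsClosed (F n)) ∧ S = ⋃ n, F n

/-- `f` is Baire class 1 if preimages of open sets are Fσ. -/
def BaireClassOne {X Y : Type*} [TopologicalSpace X] [TopologicalSpace Y] (f : X → Y) : Prop :=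
  ∀ V : Set Y, IsOpen V → IsFsigma (f ⁻¹' V)

open Set Metric Cardinal


lemma IsClosed.isFsigma' {X : Type*} [TopologicalSpace X] {s : Set X} (hs : IsClosed s) :
    IsFsigma s :=
  ⟨fun _ => s, fun _ => hs, (Set.iUnion_const s).symm⟩

lemma isFsigma_iUnion {X ι : Type*} [TopologicalSpace X] [Countable ι] {s : ι → Set X}
    (h : ∀ i, IsFsigma (s i)) : IsFsigma (⋃ i, s i) := by
  rcases isEmpty_or_nonempty ι with hι | hι
  · simpa using IsClosed.isFsigma' (isClosed_empty (X := X))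
  · obtain ⟨e, he⟩ := exists_surjective_nat ι
    choose F hFc hFe using fun n => h (e n)
    refine ⟨fun k => F k.unpair.1 k.unpair.2, fun k => hFc _ _, ?_⟩
    rw [← he.iUnion_comp s]
    rw [Set.iUnion_unpair (fun i j => F i j)]
    exact Set.iUnion_congr hFe

lemma IsOpen.isFsigma' {X : Type*} [MetricSpace X] {s : Set X} (hs : IsOpen s) :
    IsFsigma s := by
  obtain ⟨T, hTo, hTc, hTe⟩ := (isClosed_compl_iff.2 hs).isGδ
  haveI := hTc.to_subtype
  have : s = ⋃ (t : T), (↑t : Set X)ᶜ := by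
    rw [← compl_compl s, hTe, sInter_eq_iInter, compl_iInter]
  rw [this]
  exact isFsigma_iUnion fun t => (isClosed_compl_iff.2 (hTo _ t.2)).isFsigma'

lemma IsFsigma.inter_isClosed {X : Type*} [TopologicalSpace X] {s t : Set X}
    (hs : IsFsigma s) (ht : IsClosed t) : IsFsigma (s ∩ t) := by
  obtain ⟨F, hFc, rfl⟩ := hs
  exact ⟨fun n => F n ∩ t, fun n => (hFc n).inter ht, by rw [Set.iUnion_inter]⟩

/-- A Baire-class-1 map from a nonempty Baire space to a separable metric space has a
point of continuity. -/
lemma exists_continuousAt_of_baireClassOne {Z Y : Type*} [TopologicalSpace Z] [BaireSpace Z]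
    [Nonempty Z] [MetricSpace Y] [SeparableSpace Y] (g : Z → Y) (hg : BaireClassOne g) :
    ∃ z, ContinuousAt g z := by
  haveI : Nonempty Y := ⟨g (Classical.arbitrary Z)⟩
  obtain ⟨s, hsc, hsd⟩ := exists_countable_dense Y
  have hsne : s.Nonempty := hsd.nonempty
  obtain ⟨e, he⟩ := Set.Countable.exists_eq_range hsc hsne
  have hde : Dense (Set.range e) := he ▸ hsd
  set S : ℝ → Set Z := fun ε => {z | ∃ U, IsOpen U ∧ z ∈ U ∧
    ∀ a ∈ U, ∀ b ∈ U, dist (g a) (g b) ≤ ε} with hS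
  have hSopen : ∀ ε, IsOpen (S ε) := by
    intro ε
    rw [isOpen_iff_forall_mem_open]
    rintro z ⟨U, hU, hzU, hUd⟩
    exact ⟨U, fun a ha => ⟨U, hU, ha, hUd⟩, hU, hzU⟩
  have hSdense : ∀ ε : ℝ, 0 < ε → Dense (S ε) := by
    intro ε hε
    choose F hFc hFe using fun i => hg (Metric.ball (e i) (ε / 4)) Metric.isOpen_ball
    have hcov : ⋃ p : ℕ × ℕ, F p.1 p.2 = Set.univ := by
      rw [Set.eq_univ_iff_forall]
      intro z
      obtain ⟨y, ⟨i, rfl⟩, hy⟩ := hde.exists_dist_lt (g z) (by linarith : (0:ℝ) < ε / 4)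
      have : z ∈ g ⁻¹' Metric.ball (e i) (ε / 4) := by
        simpa [Metric.mem_ball, dist_comm] using hy
      rw [hFe i] at this
      obtain ⟨n, hn⟩ := Set.mem_iUnion.1 this
      exact Set.mem_iUnion.2 ⟨(i, n), hn⟩
    have hdint := dense_iUnion_interior_of_closed (fun p : ℕ × ℕ => hFc p.1 p.2) hcov
    refine hdint.mono ?_
    rintro z hz
    obtain ⟨⟨i, n⟩, hzin⟩ := Set.mem_iUnion.1 hz
    refine ⟨interior (F i n), isOpen_interior, hzin, ?_⟩
    intro a ha b hb
    have ha' : g a ∈ Metric.ball (e i) (ε / 4) := by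
      have : a ∈ g ⁻¹' Metric.ball (e i) (ε / 4) := by
        rw [hFe i]; exact Set.mem_iUnion.2 ⟨n, interior_subset ha⟩
      exact this
    have hb' : g b ∈ Metric.ball (e i) (ε / 4) := by
      have : b ∈ g ⁻¹' Metric.ball (e i) (ε / 4) := by
        rw [hFe i]; exact Set.mem_iUnion.2 ⟨n, interior_subset hb⟩
      exact this
    rw [Metric.mem_ball] at ha' hb'
    calc dist (g a) (g b) ≤ dist (g a) (e i) + dist (e i) (g b) := dist_triangle _ _ _
      _ ≤ ε / 4 + ε / 4 := by
          rw [dist_comm (e i) (g b)]; exact add_le_add ha'.le hb'.le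
      _ ≤ ε := by linarith
  have hdi : Dense (⋂ n : ℕ, S (1 / (n + 1))) := by
    refine dense_iInter_of_isOpen (fun n => hSopen _) (fun n => hSdense _ ?_)
    positivity
  obtain ⟨z, hz⟩ := hdi.nonempty
  refine ⟨z, ?_⟩
  rw [ContinuousAt, Metric.tendsto_nhds]
  intro ε hε
  obtain ⟨n, hn⟩ := exists_nat_one_div_lt hε
  have hzn := Set.mem_iInter.1 hz n
  obtain ⟨U, hU, hzU, hUd⟩ := hzn
  filter_upwards [hU.mem_nhds hzU] with a ha
  calc dist (g a) (g z) ≤ 1 / (n + 1) := hUd a ha z hzU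
    _ < ε := hn

def nodeWeight (s : List ℕ) : ℕ := s.length + s.sum

def buildNode {X : Type*} (root : X) (step : ℕ → List ℕ → X → X) : List ℕ → X
  | [] => root
  | n :: s => step n s (buildNode root step s)

lemma nodeWeight_cons (n : ℕ) (s : List ℕ) :
    nodeWeight (n :: s) = nodeWeight s + n + 1 := by
  simp [nodeWeight]; ring

lemma finite_nodeWeight_le (m : ℕ) : {p : List ℕ | nodeWeight p ≤ m}.Finite := by
  have h1 : {l : List (Fin (m + 1)) | l.length ≤ m}.Finite := List.finite_length_le _ m
  refine Set.Finite.subset (h1.image (List.map (Fin.val))) ?_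
  intro p hp
  simp only [Set.mem_setOf_eq] at hp
  have hlen : p.length ≤ m := le_trans (Nat.le_add_right _ _) hp
  have hentry : ∀ x ∈ p, x < m + 1 := by
    intro x hx
    have h2 : x ≤ p.sum := List.le_sum_of_mem hx
    have h3 : p.sum ≤ m := le_trans (Nat.le_add_left _ _) hp
    omega
  refine ⟨p.attach.map (fun x => (⟨x.1, hentry x.1 x.2⟩ : Fin (m + 1))), ?_, ?_⟩
  · simp [hlen]
  · simp [List.map_map, Function.comp]

lemma exists_bad_compact {X Y : Type*} [MetricSpace X] [CompleteSpace X] [MetricSpace Y]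
    (f : X → Y) {A B G : Set X} {C D : Set Y}
    (hC : IsClosed C) (hD : IsClosed D) (hCD : Disjoint C D)
    (hfA : ∀ x ∈ A, f x ∈ C) (hfB : ∀ x ∈ B, f x ∈ D)
    (hG : G.Nonempty) (hGA : G ⊆ closure (G ∩ A)) (hGB : G ⊆ closure (G ∩ B)) :
    ∃ K : Set X, IsCompact K ∧ K.Nonempty ∧ ∀ x : K, ¬ ContinuousAt (K.restrict f) x := by
  classical
  have hpick : ∀ x : X, x ∈ G → ∀ (bl : Bool) (ε : ℝ), 0 < ε →
      ∃ y, y ∈ G ∧ y ∈ (if bl then A else B) ∧ dist y x < ε := by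
    intro x hx bl ε hε
    cases bl with
    | true =>
      obtain ⟨y, hy, hd⟩ := Metric.mem_closure_iff.1 (hGA hx) ε hε
      exact ⟨y, hy.1, by simpa using hy.2, by rwa [dist_comm]⟩
    | false =>
      obtain ⟨y, hy, hd⟩ := Metric.mem_closure_iff.1 (hGB hx) ε hε
      exact ⟨y, hy.1, by simpa using hy.2, by rwa [dist_comm]⟩
  set pickf : X → Bool → ℝ → X := fun x bl ε =>
    if h : x ∈ G ∧ 0 < ε then (hpick x h.1 bl ε h.2).choose else x with hpickf
  set node : List ℕ → X := buildNode hG.some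
    (fun n s x => pickf x (decide (n % 2 = 0)) ((2⁻¹ : ℝ) ^ nodeWeight (n :: s))) with hnode
  have hnode_cons : ∀ n s, node (n :: s) =
      pickf (node s) (decide (n % 2 = 0)) ((2⁻¹ : ℝ) ^ nodeWeight (n :: s)) := fun n s => rfl
  have hpow_pos : ∀ k : ℕ, (0:ℝ) < 2⁻¹ ^ k := fun k => pow_pos (by norm_num) k
  have hmemG : ∀ s, node s ∈ G := by
    intro s; induction s with
    | nil => exact hG.some_mem
    | cons n s ih =>
      have hcond : node s ∈ G ∧ (0:ℝ) < 2⁻¹ ^ nodeWeight (n :: s) := ⟨ih, hpow_pos _⟩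
      rw [hnode_cons]
      simp only [hpickf]
      rw [dif_pos hcond]
      exact (hpick _ hcond.1 _ _ hcond.2).choose_spec.1
  have hspec : ∀ n s, node (n :: s) ∈ (if (decide (n % 2 = 0) : Bool) then A else B) ∧
      dist (node (n :: s)) (node s) < 2⁻¹ ^ nodeWeight (n :: s) := by
    intro n s
    have hcond : node s ∈ G ∧ (0:ℝ) < 2⁻¹ ^ nodeWeight (n :: s) := ⟨hmemG s, hpow_pos _⟩
    rw [hnode_cons]
    simp only [hpickf]
    rw [dif_pos hcond]
    exact ⟨(hpick _ hcond.1 _ _ hcond.2).choose_spec.2.1,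
      (hpick _ hcond.1 _ _ hcond.2).choose_spec.2.2⟩
  have hmemA : ∀ n s, n % 2 = 0 → node (n :: s) ∈ A := by
    intro n s hn
    have h := (hspec n s).1
    simpa [hn] using h
  have hmemB : ∀ n s, n % 2 = 1 → node (n :: s) ∈ B := by
    intro n s hn
    have h := (hspec n s).1
    simpa [hn] using h
  have hdist : ∀ n s, dist (node (n :: s)) (node s) ≤ 2⁻¹ ^ nodeWeight (n :: s) :=
    fun n s => (hspec n s).2.le
  have hhalf : ∀ n (s : List ℕ), (2⁻¹:ℝ) ^ nodeWeight (n :: s) ≤ 2⁻¹ ^ nodeWeight s / 2 := by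
    intro n s
    calc (2⁻¹:ℝ) ^ nodeWeight (n :: s) ≤ 2⁻¹ ^ (nodeWeight s + 1) := by
          refine pow_le_pow_of_le_one (by norm_num) (by norm_num) ?_
          rw [nodeWeight_cons]; omega
      _ = 2⁻¹ ^ nodeWeight s / 2 := by rw [pow_succ]; ring
  have key1 : ∀ (t s : List ℕ), dist (node (t ++ s)) (node s) ≤
      2⁻¹ ^ nodeWeight s - 2⁻¹ ^ nodeWeight (t ++ s) := by
    intro t s
    induction t with
    | nil => simp
    | cons n t ih =>
      have h1 := hdist n (t ++ s)
      have h3 := hhalf n (t ++ s)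
      calc dist (node ((n :: t) ++ s)) (node s)
          ≤ dist (node (n :: (t ++ s))) (node (t ++ s)) + dist (node (t ++ s)) (node s) := by
            rw [List.cons_append]; exact dist_triangle _ _ _
        _ ≤ 2⁻¹ ^ nodeWeight (n :: (t ++ s)) +
              (2⁻¹ ^ nodeWeight s - 2⁻¹ ^ nodeWeight (t ++ s)) := add_le_add h1 ih
        _ ≤ 2⁻¹ ^ nodeWeight s - 2⁻¹ ^ nodeWeight ((n :: t) ++ s) := by
            rw [List.cons_append]; linarith
  have key2 : ∀ (s : List ℕ) (m : ℕ), m < nodeWeight s → ∃ p, nodeWeight p ≤ m ∧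
      dist (node s) (node p) ≤ 2⁻¹ ^ m - 2⁻¹ ^ nodeWeight s := by
    intro s
    induction s with
    | nil => intro m hm; simp [nodeWeight] at hm
    | cons n s ih =>
      intro m hm
      by_cases h2 : nodeWeight s ≤ m
      · refine ⟨s, h2, ?_⟩
        have h1 := hdist n s
        have h4 : (2⁻¹:ℝ) ^ nodeWeight (n :: s) ≤ 2⁻¹ ^ (m + 1) := by
          refine pow_le_pow_of_le_one (by norm_num) (by norm_num) ?_
          omega
        have h5 : (2⁻¹:ℝ) ^ (m + 1) = 2⁻¹ ^ m / 2 := by rw [pow_succ]; ring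
        linarith
      · push_neg at h2
        obtain ⟨p, hp1, hp2⟩ := ih m h2
        refine ⟨p, hp1, ?_⟩
        have h1 := hdist n s
        have h3 := hhalf n s
        have h6 := dist_triangle (node (n :: s)) (node s) (node p)
        linarith
  have key2' : ∀ (s : List ℕ) (m : ℕ), ∃ p, nodeWeight p ≤ m ∧
      dist (node s) (node p) ≤ 2⁻¹ ^ m := by
    intro s m
    by_cases h : nodeWeight s ≤ m
    · exact ⟨s, h, by rw [dist_self]; positivity⟩
    · push_neg at h
      obtain ⟨p, h1, h2⟩ := key2 s m h
      exact ⟨p, h1, h2.trans (by linarith [hpow_pos (nodeWeight s)])⟩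
  have htb : TotallyBounded (Set.range node) := by
    rw [Metric.totallyBounded_iff]
    intro ε hε
    obtain ⟨m, hm⟩ := exists_pow_lt_of_lt_one hε (by norm_num : (2⁻¹:ℝ) < 1)
    refine ⟨node '' {p | nodeWeight p ≤ m}, (finite_nodeWeight_le m).image _, ?_⟩
    rintro _ ⟨s, rfl⟩
    obtain ⟨p, hp1, hp2⟩ := key2' s m
    exact Set.mem_biUnion (Set.mem_image_of_mem _ hp1)
      (by rw [Metric.mem_ball]; exact lt_of_le_of_lt hp2 hm)
  set K : Set X := closure (Set.range node) with hK
  have hKc : IsCompact K := TotallyBounded.isCompact_of_isClosed htb.closure isClosed_closure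
  have hKne : K.Nonempty := ⟨node [], subset_closure ⟨[], rfl⟩⟩
  set MA : Set X := {y : X | ∃ n s, n % 2 = 0 ∧ y = node (n :: s)} with hMA
  set MB : Set X := {y : X | ∃ n s, n % 2 = 1 ∧ y = node (n :: s)} with hMB
  have hMAA : MA ⊆ A := by rintro y ⟨n, s, hn, rfl⟩; exact hmemA n s hn
  have hMBB : MB ⊆ B := by rintro y ⟨n, s, hn, rfl⟩; exact hmemB n s hn
  have hMAK : MA ⊆ K := by rintro y ⟨n, s, hn, rfl⟩; exact subset_closure ⟨n :: s, rfl⟩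
  have hMBK : MB ⊆ K := by rintro y ⟨n, s, hn, rfl⟩; exact subset_closure ⟨n :: s, rfl⟩
  have happrox : ∀ z ∈ K, ∀ b : Bool, z ∈ closure (if b then MA else MB) := by
    intro z hz b
    rw [Metric.mem_closure_iff]
    intro ε hε
    obtain ⟨_, ⟨s, rfl⟩, hd⟩ := Metric.mem_closure_iff.1 hz (ε / 2) (by linarith)
    obtain ⟨m, hm⟩ := exists_pow_lt_of_lt_one (show (0:ℝ) < ε / 2 by linarith)
      (by norm_num : (2⁻¹:ℝ) < 1)
    set n' : ℕ := if b then 2 * m else 2 * m + 1 with hn'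
    have hpar : (if b then (n' % 2 = 0) else (n' % 2 = 1)) := by
      cases b <;> simp [hn'] <;> omega
    have hmem : node (n' :: s) ∈ (if b then MA else MB) := by
      cases b
      · simp only [Bool.false_eq_true, if_false] at hpar ⊢
        exact ⟨n', s, hpar, rfl⟩
      · simp only [if_true] at hpar ⊢
        exact ⟨n', s, hpar, rfl⟩
    refine ⟨node (n' :: s), hmem, ?_⟩
    have h1 : dist (node (n' :: s)) (node s) ≤ 2⁻¹ ^ nodeWeight (n' :: s) := hdist _ _
    have h2 : (2⁻¹:ℝ) ^ nodeWeight (n' :: s) ≤ 2⁻¹ ^ m := by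
      refine pow_le_pow_of_le_one (by norm_num) (by norm_num) ?_
      rw [nodeWeight_cons]
      cases b <;> simp [hn'] <;> omega
    have h3 : dist (node s) (node (n' :: s)) < ε / 2 := by
      rw [dist_comm]; exact lt_of_le_of_lt (h1.trans h2) hm
    calc dist z (node (n' :: s)) ≤ dist z (node s) + dist (node s) (node (n' :: s)) :=
          dist_triangle _ _ _
      _ < ε / 2 + ε / 2 := add_lt_add hd h3
      _ = ε := by ring
  refine ⟨K, hKc, hKne, ?_⟩
  intro x hx
  have hcl : ∀ (M : Set X), M ⊆ K → (x : X) ∈ closure M →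
      K.restrict f x ∈ closure (K.restrict f '' (Subtype.val ⁻¹' M)) := by
    intro M hMK hxM
    refine (hx.continuousWithinAt).mem_closure_image ?_
    rw [closure_subtype]
    have himg : (Subtype.val '' (Subtype.val ⁻¹' M : Set ↥K)) = M := by
      rw [Subtype.image_preimage_coe]
      exact Set.inter_eq_self_of_subset_right hMK
    rw [himg]; exact hxM
  have h2 : K.restrict f x ∈ C := by
    have := hcl MA hMAK (by simpa using happrox x x.2 true)
    refine hC.closure_subset_iff.2 ?_ this
    rintro _ ⟨p, hp, rfl⟩
    exact hfA _ (hMAA hp)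
  have h3 : K.restrict f x ∈ D := by
    have := hcl MB hMBK (by simpa using happrox x x.2 false)
    refine hD.closure_subset_iff.2 ?_ this
    rintro _ ⟨p, hp, rfl⟩
    exact hfB _ (hMBB hp)
  exact Set.disjoint_left.1 hCD h2 h3

noncomputable def dSeq {X : Type*} (Φ : Set X → Set X) : Ordinal.{0} → Set X :=
  Ordinal.lt_wf.fix fun α ih => ⋂ β : {β : Ordinal // β < α}, Φ (ih β.1 β.2)

lemma dSeq_def {X : Type*} (Φ : Set X → Set X) (α : Ordinal.{0}) :
    dSeq Φ α = ⋂ β : {β : Ordinal.{0} // β < α}, Φ (dSeq Φ β.1) := by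
  rw [dSeq, Ordinal.lt_wf.fix_eq]

lemma mem_dSeq_iff {X : Type*} {Φ : Set X → Set X} {α : Ordinal.{0}} {x : X} :
    x ∈ dSeq Φ α ↔ ∀ β < α, x ∈ Φ (dSeq Φ β) := by
  rw [dSeq_def]
  simp [Set.mem_iInter, Subtype.forall]

lemma dSeq_anti {X : Type*} (Φ : Set X → Set X) {α β : Ordinal.{0}} (h : β ≤ α) :
    dSeq Φ α ⊆ dSeq Φ β := by
  intro x hx
  rw [mem_dSeq_iff] at hx ⊢
  exact fun γ hγ => hx γ (lt_of_lt_of_le hγ h)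

lemma dSeq_succ {X : Type*} {Φ : Set X → Set X} (hm : Monotone Φ) (α : Ordinal.{0}) :
    dSeq Φ (α + 1) = Φ (dSeq Φ α) := by
  apply subset_antisymm
  · intro x hx
    exact mem_dSeq_iff.1 hx α (by rw [Ordinal.add_one_eq_succ]; exact Order.lt_succ α)
  · intro x hx
    rw [mem_dSeq_iff]
    intro β hβ
    have hβα : β ≤ α := by rwa [Ordinal.add_one_eq_succ, Order.lt_succ_iff] at hβ
    exact hm (dSeq_anti Φ hβα) hx

lemma exists_fsigma_separation {X Y : Type*} [MetricSpace X] [CompleteSpace X]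
    [SecondCountableTopology X] [MetricSpace Y] (f : X → Y)
    (hyp : ∀ K : Set X, IsCompact K → K.Nonempty → ∃ x : K, ContinuousAt (K.restrict f) x)
    {C D : Set Y} (hC : IsClosed C) (hD : IsClosed D) (hCD : Disjoint C D) :
    ∃ S : Set X, IsFsigma S ∧ f ⁻¹' C ⊆ S ∧ Disjoint S (f ⁻¹' D) := by
  classical
  set A := f ⁻¹' C with hA
  set B := f ⁻¹' D with hB
  set Φ : Set X → Set X := fun F => closure (F ∩ A) ∩ closure (F ∩ B) with hΦ
  have hmono : Monotone Φ := fun F F' h =>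
    Set.inter_subset_inter (closure_mono (Set.inter_subset_inter_left _ h))
      (closure_mono (Set.inter_subset_inter_left _ h))
  have hclosed : ∀ F, IsClosed (Φ F) := fun F => isClosed_closure.inter isClosed_closure
  have hempty : ∀ F : Set X, F ⊆ Φ F → F = ∅ := by
    intro F hF
    by_contra hne
    rw [← Ne, ← Set.nonempty_iff_ne_empty] at hne
    have hGne : (Φ F).Nonempty := hne.mono hF
    have hGsub : Φ F ⊆ Φ (Φ F) := hmono hF
    obtain ⟨K, hKc, hKne, hKbad⟩ := exists_bad_compact f hC hD hCD
      (fun x hx => hx) (fun x hx => hx) hGne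
      (hGsub.trans Set.inter_subset_left) (hGsub.trans Set.inter_subset_right)
    obtain ⟨x, hx⟩ := hyp K hKc hKne
    exact hKbad x hx
  have hsucc : ∀ α, dSeq Φ (α + 1) = Φ (dSeq Φ α) := dSeq_succ hmono
  have hscl : ∀ α, IsClosed (dSeq Φ (α + 1)) := fun α => (hsucc α) ▸ hclosed _
  have hex : ∃ α, α < (Cardinal.aleph 1).ord ∧ dSeq Φ α = ∅ := by
    by_contra hcon
    push_neg at hcon
    obtain ⟨bb, hbbc, hbbne, hbasis⟩ := exists_countable_basis X
    haveI := hbbc.to_subtype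
    have hchoice : ∀ α : Ordinal.{0}, α < (Cardinal.aleph 1).ord →
        ∃ U ∈ bb, (U ∩ dSeq Φ α).Nonempty ∧ U ∩ dSeq Φ (α + 1) = ∅ := by
      intro α hα
      have h1 : dSeq Φ (α + 1) ⊆ dSeq Φ α := dSeq_anti Φ (by rw [Ordinal.add_one_eq_succ]; exact Order.le_succ α)
      have hne12 : dSeq Φ (α + 1) ≠ dSeq Φ α := by
        intro heq
        have hsub : dSeq Φ α ⊆ Φ (dSeq Φ α) := by rw [← hsucc α, heq]
        exact (hcon α hα).ne_empty (hempty _ hsub)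
      obtain ⟨x, hx1, hx2⟩ : ∃ x, x ∈ dSeq Φ α ∧ x ∉ dSeq Φ (α + 1) := by
        by_contra h; push_neg at h
        exact hne12 (subset_antisymm h1 h)
      obtain ⟨U, hU, hxU, hUsub⟩ := hbasis.exists_subset_of_mem_open
        (show x ∈ (dSeq Φ (α + 1))ᶜ from hx2) (hscl α).isOpen_compl
      refine ⟨U, hU, ⟨x, hxU, hx1⟩, ?_⟩
      exact Set.disjoint_iff_inter_eq_empty.1
        (Set.disjoint_left.2 fun a ha h2 => hUsub ha h2)
    choose g hg1 hg2 hg3 using hchoice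
    have hinj : ∀ (α β : Ordinal.{0}) (hα : α < (Cardinal.aleph 1).ord)
        (hβ : β < (Cardinal.aleph 1).ord), α < β → g α hα ≠ g β hβ := by
      intro α β hα hβ hab heq
      obtain ⟨x, hxU, hxd⟩ := hg2 β hβ
      have hsub : dSeq Φ β ⊆ dSeq Φ (α + 1) := dSeq_anti Φ (by
        rw [Ordinal.add_one_eq_succ, Order.succ_le_iff]; exact hab)
      have hmem : x ∈ g α hα ∩ dSeq Φ (α + 1) := ⟨heq ▸ hxU, hsub hxd⟩
      rw [hg3 α hα] at hmem
      exact hmem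
    have hinj2 : Function.Injective
        (fun p : Set.Iio ((Cardinal.aleph 1).ord) => (⟨g p.1 p.2, hg1 p.1 p.2⟩ : bb)) := by
      rintro ⟨α, hα⟩ ⟨β, hβ⟩ h
      simp only [Subtype.mk.injEq] at h ⊢
      rcases lt_trichotomy α β with h1 | h1 | h1
      · exact absurd h (hinj α β hα hβ h1)
      · exact h1
      · exact absurd h.symm (hinj β α hβ hα h1)
    haveI : Countable (Set.Iio ((Cardinal.aleph 1).ord)) := hinj2.countable
    haveI : Countable ((Cardinal.aleph 1).ord.ToType) :=
      Countable.of_equiv _ (Ordinal.ToType.mk (o := (Cardinal.aleph 1).ord)).toEquiv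
    have hle : #((Cardinal.aleph 1).ord.ToType) ≤ Cardinal.aleph0 := Cardinal.mk_le_aleph0
    rw [Cardinal.mk_toType, Cardinal.card_ord] at hle
    exact absurd hle (not_le.2 Cardinal.aleph0_lt_aleph_one)
  obtain ⟨α₀, hα₀, h0⟩ := hex
  haveI : Countable (α₀.ToType) := by
    refine Cardinal.mk_le_aleph0_iff.1 ?_
    rw [Cardinal.mk_toType]
    have h1 := Cardinal.lt_ord.1 hα₀
    rwa [← Cardinal.succ_aleph0, Order.lt_succ_iff] at h1
  haveI hcnt : Countable (Set.Iio α₀) :=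
    Countable.of_equiv _ (Ordinal.ToType.mk (o := α₀)).toEquiv.symm
  refine ⟨⋃ β : Set.Iio α₀, (closure (dSeq Φ β.1 ∩ A) ∩ (dSeq Φ (β.1 + 1))ᶜ), ?_, ?_, ?_⟩
  · refine isFsigma_iUnion fun β => ?_
    rw [Set.inter_comm]
    exact ((hscl β.1).isOpen_compl.isFsigma').inter_isClosed isClosed_closure
  · intro x hxA
    have hx0 : x ∉ dSeq Φ α₀ := by rw [h0]; exact Set.notMem_empty x
    have hβmem := Ordinal.lt_wf.min_mem {α : Ordinal.{0} | x ∉ dSeq Φ α} ⟨α₀, hx0⟩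
    set β := Ordinal.lt_wf.min {α : Ordinal.{0} | x ∉ dSeq Φ α} ⟨α₀, hx0⟩ with hβdef
    have hβT : x ∉ dSeq Φ β := hβmem
    have hβle : β ≤ α₀ := not_lt.1 (Ordinal.lt_wf.not_lt_min _ hx0)
    have hexγ : ∃ γ, γ < β ∧ x ∉ Φ (dSeq Φ γ) := by
      by_contra h; push_neg at h
      exact hβT (mem_dSeq_iff.2 fun γ hγ => h γ hγ)
    obtain ⟨γ, hγβ, hγ⟩ := hexγ
    have hxγ : x ∈ dSeq Φ γ := by
      by_contra h
      exact Ordinal.lt_wf.not_lt_min _ h hγβ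
    have hγα₀ : γ < α₀ := lt_of_lt_of_le hγβ hβle
    refine Set.mem_iUnion.2 ⟨⟨γ, hγα₀⟩, subset_closure ⟨hxγ, hxA⟩, ?_⟩
    rw [Set.mem_compl_iff, hsucc γ]
    exact hγ
  · rw [Set.disjoint_left]
    rintro x hxS hxB
    obtain ⟨⟨γ, hγα⟩, hxcl, hxnot⟩ := Set.mem_iUnion.1 hxS
    by_cases hxγ : x ∈ dSeq Φ γ
    · refine hxnot ?_
      rw [hsucc γ]
      exact ⟨hxcl, subset_closure ⟨hxγ, hxB⟩⟩
    · have hδmem := Ordinal.lt_wf.min_mem {α : Ordinal.{0} | x ∉ dSeq Φ α} ⟨γ, hxγ⟩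
      set δ := Ordinal.lt_wf.min {α : Ordinal.{0} | x ∉ dSeq Φ α} ⟨γ, hxγ⟩ with hδdef
      have hδT : x ∉ dSeq Φ δ := hδmem
      have hδγ : δ ≤ γ := not_lt.1 (Ordinal.lt_wf.not_lt_min _ hxγ)
      have hexρ : ∃ ρ, ρ < δ ∧ x ∉ Φ (dSeq Φ ρ) := by
        by_contra h; push_neg at h
        exact hδT (mem_dSeq_iff.2 fun ρ hρ => h ρ hρ)
      obtain ⟨ρ, hρδ, hρ⟩ := hexρ
      have hxρ : x ∈ dSeq Φ ρ := by
        by_contra h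
        exact Ordinal.lt_wf.not_lt_min _ h hρδ
      refine hρ ?_
      have hsub : dSeq Φ γ ⊆ dSeq Φ ρ := dSeq_anti Φ (le_of_lt (lt_of_lt_of_le hρδ hδγ))
      exact ⟨closure_mono (Set.inter_subset_inter_left _ hsub) hxcl,
        subset_closure ⟨hxρ, hxB⟩⟩

/-- Baire's grand theorem: for `X` a Polish space, `Y` a separable metrizable space
and `f : X → Y`, `f` is Baire class 1 iff the restriction `f↾K` has a point of
continuity for every nonempty compact `K ⊆ X`. -/
theorem baire_grand_theorem {X Y : Type*} [TopologicalSpace X] [PolishSpace X]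
    [TopologicalSpace Y] [SeparableSpace Y] [MetrizableSpace Y]
    (f : X → Y) :
    BaireClassOne f ↔
      ∀ K : Set X, IsCompact K → K.Nonempty →
        ∃ x : K, ContinuousAt (K.restrict f) x := by
  letI := upgradeIsCompletelyMetrizable X
  letI : MetricSpace Y := TopologicalSpace.metrizableSpaceMetric Y
  constructor
  · intro hf K hK hne
    haveI : CompleteSpace K := hK.isClosed.completeSpace_coe
    haveI : Nonempty K := hne.to_subtype
    have hg : BaireClassOne (K.restrict f) := by
      intro V hV
      obtain ⟨F, hFc, hFe⟩ := hf V hV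
      refine ⟨fun n => Subtype.val ⁻¹' F n, fun n => (hFc n).preimage continuous_subtype_val, ?_⟩
      have hpre : K.restrict f ⁻¹' V = Subtype.val ⁻¹' (f ⁻¹' V) := rfl
      rw [hpre, hFe, Set.preimage_iUnion]
    exact exists_continuousAt_of_baireClassOne _ hg
  · intro h V hV
    by_cases hVc : Vᶜ = ∅
    · rw [compl_empty_iff] at hVc
      rw [hVc]
      exact ⟨fun _ => Set.univ, fun _ => isClosed_univ, (Set.iUnion_const Set.univ).symm⟩
    · have hVcne : Vᶜ.Nonempty := Set.nonempty_iff_ne_empty.2 hVc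
      have hVccl : IsClosed Vᶜ := isClosed_compl_iff.2 hV
      have hCn : ∀ n : ℕ, IsClosed {y : Y | (1:ℝ)/(n+1) ≤ Metric.infDist y Vᶜ} := fun n =>
        isClosed_le continuous_const (Metric.continuous_infDist_pt _)
      have hdisj : ∀ n : ℕ, Disjoint {y : Y | (1:ℝ)/(n+1) ≤ Metric.infDist y Vᶜ} Vᶜ := by
        intro n
        rw [Set.disjoint_left]
        intro y hy hyc
        rw [Set.mem_setOf_eq, Metric.infDist_zero_of_mem hyc] at hy
        have hp : (0:ℝ) < 1/(n+1) := by positivity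
        linarith
      have hsep := fun n : ℕ => exists_fsigma_separation f h (hCn n) hVccl (hdisj n)
      choose S hSf hS1 hS2 using hsep
      have hU : f ⁻¹' V = ⋃ n, S n := by
        apply subset_antisymm
        · intro x hx
          have hpos : 0 < Metric.infDist (f x) Vᶜ :=
            (hVccl.notMem_iff_infDist_pos hVcne).1 (by simpa using hx)
          obtain ⟨n, hn⟩ := exists_nat_one_div_lt hpos
          exact Set.mem_iUnion.2 ⟨n, hS1 n (le_of_lt hn)⟩
        · rw [Set.iUnion_subset_iff]
          intro n x hx
          by_contra hxV
          exact Set.disjoint_left.1 (hS2 n) hx (by simpa using hxV)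
      rw [hU]
      exact isFsigma_iUnion hSf
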